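/- (Abstract form of the paper's Theorem 'if the Lorentzian distance is continuous then the manifold is causally continuous', i.e. Theorem 4.24 of Beem–Ehrlich–Easley as reproved in the paper.) Under the stated assumptions on X, ≪ and d, if the function d : X × X → [0,∞] is continuous, then Miss⁺(x) = ∅ for every x ∈ X and the set-valued map I⁺ is outer continuous. -/

import Mathlib

open Filter ENNReal

/-- A future directed sequence converging to `x`. -/
def FutureSeq {X : Type*} [TopologicalSpace X] (r : X → X → Prop) (xs : ℕ → X) (x : X) : Prop :=
  (∀ i, r (xs i) (xs (i + 1))) ∧ (∀ i, r (xs i) x) ∧ Tendsto xs atTop (nhds x)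

/-- `Miss⁺(x)` computed using the future directed sequence `xs` converging to `x`. -/
def MissPlus {X : Type*} [TopologicalSpace X] (r : X → X → Prop) (xs : ℕ → X) (x : X) : Set X :=
  interior ((⋂ i, {w : X | r (xs i) w}) \ {w : X | r x w})

/-- Outer continuity of the set-valued map `I⁺`. -/
def OuterCts {X : Type*} [TopologicalSpace X] (r : X → X → Prop) : Prop :=
  ∀ x : X, ∀ K : Set X, IsCompact K → K ⊆ (closure {w : X | r x w})ᶜ →
    ∃ U : Set X, IsOpen U ∧ x ∈ U ∧ ∀ y ∈ U, closure {w : X | r y w} ∩ K = ∅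

/-- If the Lorentzian distance is continuous then `Miss⁺(x) = ∅` for all `x` and
`I⁺` is outer continuous (abstract form of Theorem 4.24 of Beem--Ehrlich--Easley). -/
theorem stmt_4 {X : Type*} [TopologicalSpace X] [T2Space X] [LocallyCompactSpace X]
    [FirstCountableTopology X]
    (r : X → X → Prop)
    (htrans : ∀ a b c : X, r a b → r b c → r a c)
    (hopenFut : ∀ z : X, IsOpen {w : X | r z w})
    (hopenPast : ∀ z : X, IsOpen {w : X | r w z})
    (hseq : ∀ x : X, ∃ xs : ℕ → X, FutureSeq r xs x)
    (hmeet : ∀ z : X, ∀ U ∈ nhds z, ∃ w ∈ U, r z w)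
    (d : X → X → ℝ≥0∞)
    (hd_zero : ∀ u v : X, ¬ r u v → d u v = 0)
    (hd_pos : ∀ u v : X, r u v → 0 < d u v)
    (hd_revtri : ∀ u v w : X, r u v → r v w → d u v + d v w ≤ d u w)
    (hchron_dense : ∀ U : Set X, IsOpen U → U.Nonempty → ∃ u ∈ U, ∃ v ∈ U, r u v)
    (hd_cont : Continuous (fun p : X × X => d p.1 p.2)) :
    (∀ (x : X) (xs : ℕ → X), FutureSeq r xs x → MissPlus r xs x = ∅) ∧ OuterCts r := by
  constructor
  · -- Miss⁺(x) = ∅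
    intro x xs hxs
    by_contra hne
    rw [← Ne, ← Set.nonempty_iff_ne_empty] at hne
    obtain ⟨u, hu, v, hv, huv⟩ := hchron_dense _ isOpen_interior hne
    have hu' := interior_subset hu
    have hv' := interior_subset hv
    have hnxu : ¬ r x u := hu'.2
    have hnxv : ¬ r x v := hv'.2
    -- for each i, d (xs i) v ≥ d u v
    have hbound : ∀ i, d u v ≤ d (xs i) v := by
      intro i
      have hiu : r (xs i) u := by
        have := hu'.1
        simpa using Set.mem_iInter.1 this i
      calc d u v ≤ d (xs i) u + d u v := le_add_self
        _ ≤ d (xs i) v := hd_revtri _ _ _ hiu huv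
    have htend : Tendsto (fun i => d (xs i) v) atTop (nhds (d x v)) := by
      have : Tendsto (fun i => ((xs i, v) : X × X)) atTop (nhds (x, v)) := by
        exact (hxs.2.2).prodMk_nhds tendsto_const_nhds
      exact (hd_cont.tendsto (x, v)).comp this
    have hge : d u v ≤ d x v := ge_of_tendsto' htend hbound
    rw [hd_zero x v hnxv] at hge
    exact absurd (le_antisymm hge zero_le) (hd_pos u v huv).ne'
  · -- outer continuity
    intro x K hK hKsub
    by_contra hcon
    push_neg at hcon
    -- extract a sequence y n → x with closure I⁺(y n) ∩ K ≠ ∅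
    obtain ⟨B, hB⟩ := (nhds x).exists_antitone_basis
    have hmemB : ∀ n, B n ∈ nhds x := fun n => hB.1.mem_of_mem trivial
    have hpick : ∀ n : ℕ, ∃ y, y ∈ B n ∧ (closure {w : X | r y w} ∩ K).Nonempty := by
      intro n
      obtain ⟨y, hyU, hy⟩ := hcon (interior (B n)) isOpen_interior
        (mem_interior_iff_mem_nhds.2 (hmemB n))
      exact ⟨y, interior_subset hyU, hy⟩
    choose y hyB hyK using hpick
    choose z hz using hyK
    have hy_tend : Tendsto y atTop (nhds x) := hB.tendsto hyB
    have hzK : ∀ n, z n ∈ K := fun n => (hz n).2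
    obtain ⟨a, haK, φ, hφ, hza⟩ := hK.tendsto_subseq hzK
    have haV : a ∈ (closure {w : X | r x w})ᶜ := hKsub haK
    have hVopen : IsOpen (closure {w : X | r x w})ᶜ := isOpen_compl_iff.2 isClosed_closure
    obtain ⟨w, hwV, haw⟩ := hmeet a _ (hVopen.mem_nhds haV)
    obtain ⟨w', hw'V, hww'⟩ := hmeet w _ (hVopen.mem_nhds hwV)
    -- eventually z (φ n) ∈ I⁻(w)
    have hev : ∀ᶠ n in atTop, r (z (φ n)) w :=
      hza.eventually ((hopenPast w).mem_nhds (by exact haw))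
    have hbound : ∀ᶠ n in atTop, d w w' ≤ d (y (φ n)) w' := by
      filter_upwards [hev] with n hn
      -- z (φ n) ∈ closure I⁺(y (φ n)) and I⁻(w) is an open nbhd of it
      have hzc : z (φ n) ∈ closure {p : X | r (y (φ n)) p} := (hz (φ n)).1
      obtain ⟨p, hp1, hp2⟩ := mem_closure_iff.1 hzc _ (hopenPast w) hn
      -- y (φ n) ≪ p ≪ w ≪ w'
      calc d w w' ≤ d p w + d w w' := le_add_self
        _ ≤ d p w' := hd_revtri _ _ _ hp1 hww'
        _ ≤ d (y (φ n)) p + d p w' := le_add_self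
        _ ≤ d (y (φ n)) w' := hd_revtri _ _ _ hp2 (htrans p w w' hp1 hww')
    have htend : Tendsto (fun n => d (y (φ n)) w') atTop (nhds (d x w')) := by
      have hyφ : Tendsto (fun n => y (φ n)) atTop (nhds x) :=
        hy_tend.comp hφ.tendsto_atTop
      exact (hd_cont.tendsto (x, w')).comp (hyφ.prodMk_nhds tendsto_const_nhds)
    have hge : d w w' ≤ d x w' := ge_of_tendsto htend hbound
    have hrxw' : r x w' := by
      by_contra hnr
      rw [hd_zero x w' hnr] at hge
      exact absurd (le_antisymm hge zero_le) (hd_pos w w' hww').ne'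
    exact hw'V (subset_closure hrxw')
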